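/- arXiv:2305.07274 — 2 statements merged into one kernel-verified Lean document; each statement's English description precedes it below -/
import Mathlib

section
/- For every positive integer n and integer T with 5n ≤ 2T and T ≤ 4n, there exists an (n,T,B)-synthesis code C ⊆ Σ^n with |C| ≥ 4^{n−1} / (2n); hence its redundancy 2n − log₂|C| is at most 3 + log₂ n bits. -/
/-- A list of integers is quaternary if all entries lie in {1,2,3,4}. -/
def IsQ (x : List ℤ) : Prop := ∀ a ∈ x, 1 ≤ a ∧ a ≤ 4

/-- The alternating quaternary supersequence 1,2,3,4,1,2,3,4,... of length `T`. -/
def altSeq (T : ℕ) : List ℤ := (List.range T).map (fun i => ((i % 4 : ℕ) : ℤ) + 1)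

/-- The synthesis time of `x`: the least `T` such that `x` is a subsequence of `altSeq T`. -/
noncomputable def synTime (x : List ℤ) : ℕ := sInf {T : ℕ | x.Sublist (altSeq T)}

/-- The shifted modulo: the unique element of {1,2,3,4} congruent to `a` mod 4. -/
def mods4 (a : ℤ) : ℤ := (a - 1) % 4 + 1

/-- The differential word of `x`. -/
def diffWord (x : List ℤ) : List ℤ := List.zipWith (fun p c => mods4 (c - p)) (0 :: x) x

/-- The set of quaternary words of length `n` with synthesis time at most `T`. -/
def W (n : ℕ) (T : ℤ) : Set (List ℤ) :=
  {x | x.length = n ∧ IsQ x ∧ (synTime x : ℤ) ≤ T}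

/-- `A n T` is the number of quaternary words of length `n` with synthesis time at most `T`. -/
noncomputable def A (n : ℕ) (T : ℤ) : ℕ := (W n T).ncard

/-- The single-indel ball of `x`. -/
def ball (x : List ℤ) : Set (List ℤ) :=
  {y | y = x ∨ (y.length + 1 = x.length ∧ y.Sublist x) ∨
       (x.length + 1 = y.length ∧ IsQ y ∧ x.Sublist y)}

/-- The auxiliary binary sequence of `x` (as 0/1 naturals). -/
def auxSeq (x : List ℤ) : List ℕ :=
  List.zipWith (fun a b => if a ≤ b then 1 else 0) x x.tail

/-- VT syndrome of a binary word: `∑ i·w_i` with positions starting from 1. -/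
def vtSyn (w : List ℕ) : ℕ := ∑ i ∈ Finset.range w.length, (i + 1) * w.getD i 0

/-- The quaternary VT code. -/
def VTn (n : ℕ) (a : ZMod n) (b : ZMod 4) : Set (List ℤ) :=
  {x | x.length = n ∧ IsQ x ∧ ((vtSyn (auxSeq x) : ℕ) : ZMod n) = a ∧
       ((x.sum : ℤ) : ZMod 4) = b}

/-- The quaternary VT code with synthesis time constraint. -/
def VTnT (n : ℕ) (a : ZMod n) (b : ZMod 4) (T : ℤ) : Set (List ℤ) :=
  {x ∈ VTn n a b | (synTime x : ℤ) ≤ T}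

/- ---- vtSyn basics ---- -/
lemma sum_getD (l : List ℕ) : ∑ i ∈ Finset.range l.length, l.getD i 0 = l.sum := by
  induction l with
  | nil => simp
  | cons a l ih =>
    rw [List.length_cons, Finset.sum_range_succ']
    simp only [List.getD_cons_succ, List.getD_cons_zero, List.sum_cons, ih]
    omega

@[simp] lemma vtSyn_nil : vtSyn [] = 0 := by simp [vtSyn]

lemma vtSyn_cons (a : ℕ) (l : List ℕ) : vtSyn (a :: l) = a + l.sum + vtSyn l := by
  unfold vtSyn
  rw [List.length_cons, Finset.sum_range_succ']
  simp only [List.getD_cons_succ, List.getD_cons_zero]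
  have : ∑ i ∈ Finset.range l.length, (i + 1 + 1) * l.getD i 0
      = (∑ i ∈ Finset.range l.length, (i + 1) * l.getD i 0)
        + ∑ i ∈ Finset.range l.length, l.getD i 0 := by
    rw [← Finset.sum_add_distrib]
    congr 1; ext i; ring
  rw [this, sum_getD]; ring

lemma vtSyn_append (s t : List ℕ) :
    vtSyn (s ++ t) = vtSyn s + s.length * t.sum + vtSyn t := by
  induction s with
  | nil => simp
  | cons a s ih =>
    simp only [List.cons_append, vtSyn_cons, ih, List.sum_append, List.length_cons]
    ring

/- ---- auxSeq basics ---- -/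
@[simp] lemma auxSeq_nil : auxSeq [] = [] := by simp [auxSeq]
@[simp] lemma auxSeq_single (a : ℤ) : auxSeq [a] = [] := by simp [auxSeq]
@[simp] lemma auxSeq_cons_cons (a b : ℤ) (l : List ℤ) :
    auxSeq (a :: b :: l) = (if a ≤ b then 1 else 0) :: auxSeq (b :: l) := by
  simp [auxSeq]

@[simp] lemma length_auxSeq (l : List ℤ) : (auxSeq l).length = l.length - 1 := by
  simp [auxSeq]

lemma auxSeq_le_one (l : List ℤ) : ∀ t ∈ auxSeq l, t ≤ 1 := by
  induction l with
  | nil => simp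
  | cons a l ih =>
    cases l with
    | nil => simp
    | cons b l =>
      intro t ht
      rw [auxSeq_cons_cons] at ht
      rcases List.mem_cons.mp ht with h | h
      · subst h; split <;> omega
      · exact ih t h

lemma auxSeq_append (u : List ℤ) (b : ℤ) (r : List ℤ) :
    auxSeq (u ++ b :: r) = auxSeq (u ++ [b]) ++ auxSeq (b :: r) := by
  induction u with
  | nil => simp
  | cons a u ih =>
    cases u with
    | nil => simp
    | cons a' u' =>
      simp only [List.cons_append, auxSeq_cons_cons] at *
      rw [ih]

/- ---- dsum and mods4 ---- -/
def dsum : ℤ → List ℤ → ℤ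
  | _, [] => 0
  | p, c :: x => mods4 (c - p) + dsum c x

lemma mods4_mem (a : ℤ) : 1 ≤ mods4 a ∧ mods4 a ≤ 4 := by unfold mods4; omega

lemma dsum_nonneg (p : ℤ) (x : List ℤ) : 0 ≤ dsum p x := by
  induction x generalizing p with
  | nil => simp [dsum]
  | cons c x ih => have := mods4_mem (c - p); simp only [dsum]; have := ih c; omega

lemma diffWord_sum (x : List ℤ) : (diffWord x).sum = dsum 0 x := by
  suffices h : ∀ (p : ℤ), (List.zipWith (fun p c => mods4 (c - p)) (p :: x) x).sum = dsum p x by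
    exact h 0
  induction x with
  | nil => intro p; simp [dsum]
  | cons c x ih => intro p; simp only [List.zipWith, List.sum_cons, dsum, ih]

/- ---- sublist of altSeq ---- -/
lemma sub_alt : ∀ (x : List ℤ) (t : ℕ) (p : ℤ), IsQ x → ((t : ℤ) - p) % 4 = 0 →
    x.Sublist ((altSeq (t + (dsum p x).toNat)).drop t) := by
  intro x
  induction x with
  | nil => intro t p _ _; simp
  | cons c x ih =>
    intro t p hq hm
    have hc : 1 ≤ c ∧ c ≤ 4 := hq c (List.mem_cons_self)
    have hq' : IsQ x := fun a ha => hq a (List.mem_cons_of_mem _ ha)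
    set d : ℤ := mods4 (c - p) with hd
    have hd14 : 1 ≤ d ∧ d ≤ 4 := mods4_mem _
    have hdm : (d - (c - p)) % 4 = 0 := by unfold mods4 at hd; omega
    set dn : ℕ := d.toNat with hdn
    have hdnz : (dn : ℤ) = d := Int.toNat_of_nonneg (by omega)
    have hsplit : (dsum p (c :: x)).toNat = dn + (dsum c x).toNat := by
      have h1 := dsum_nonneg c x
      simp only [dsum]; omega
    have hm' : ((t + dn : ℕ) : ℤ) - c % 4 = 0 ∨ True := Or.inr trivial
    have hmod : (((t + dn : ℕ) : ℤ) - c) % 4 = 0 := by push_cast; omega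
    have IH := ih (t + dn) c hq' hmod
    set N : ℕ := t + (dsum p (c :: x)).toNat with hN
    have hNeq : t + dn + (dsum c x).toNat = N := by omega
    rw [hNeq] at IH
    set L : List ℤ := altSeq N with hL
    have hlen : L.length = N := by simp [hL, altSeq]
    have hlt : t + dn - 1 < L.length := by
      have := Int.toNat_of_nonneg (dsum_nonneg c x); omega
    have hget : L[t + dn - 1]'hlt = (((t + dn - 1) % 4 : ℕ) : ℤ) + 1 := by
      simp [hL, altSeq]
    have hgc : ((((t + dn - 1) % 4 : ℕ)) : ℤ) + 1 = c := by omega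
    rw [hgc] at hget
    have hdrop : L.drop (t + dn - 1) = c :: L.drop (t + dn) := by
      rw [List.drop_eq_getElem_cons hlt, hget]
      have he : t + dn - 1 + 1 = t + dn := by omega
      rw [he]
    have h1 : (c :: x).Sublist (L.drop (t + dn - 1)) := by
      rw [hdrop]; exact IH.cons₂ c
    have h2 : L.drop (t + dn - 1) = (L.drop t).drop (dn - 1) := by
      rw [List.drop_drop]
      congr 1
      omega
    rw [h2] at h1
    exact h1.trans (List.drop_sublist _ _)

lemma synTime_le (x : List ℤ) (hq : IsQ x) : (synTime x : ℤ) ≤ dsum 0 x := by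
  have h := sub_alt x 0 0 hq (by simp)
  simp only [Nat.zero_add, List.drop_zero, Nat.cast_ofNat] at h
  have : synTime x ≤ (dsum 0 x).toNat := Nat.sInf_le (by simpa using h)
  have h2 := dsum_nonneg 0 x
  omega

/- ---- the pairing involution ---- -/
def phi : ℤ → List ℤ → List ℤ
  | _, [] => []
  | k, a :: l => mods4 (k - a) :: phi (k + 1) l

@[simp] lemma phi_length (k : ℤ) (l : List ℤ) : (phi k l).length = l.length := by
  induction l generalizing k with
  | nil => simp [phi]
  | cons a l ih => simp [phi, ih]

lemma phi_isQ (k : ℤ) (l : List ℤ) : IsQ (phi k l) := by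
  induction l generalizing k with
  | nil => intro a ha; simp [phi] at ha
  | cons a l ih =>
    intro b hb
    simp only [phi, List.mem_cons] at hb
    rcases hb with h | h
    · subst h; exact mods4_mem _
    · exact ih (k + 1) b h

lemma phi_phi (k : ℤ) (l : List ℤ) (hq : IsQ l) : phi k (phi k l) = l := by
  induction l generalizing k with
  | nil => simp [phi]
  | cons a l ih =>
    have ha := hq a (List.mem_cons_self)
    have hq' : IsQ l := fun b hb => hq b (List.mem_cons_of_mem _ hb)
    simp only [phi, List.cons.injEq]
    constructor
    · unfold mods4; omega
    · exact ih (k + 1) hq'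

lemma phi_ne (k : ℤ) (a : ℤ) (l : List ℤ) (ha : 1 ≤ a ∧ a ≤ 4) (hk : k % 4 = 1) :
    phi k (a :: l) ≠ a :: l := by
  simp only [phi, ne_eq, List.cons.injEq, not_and]
  intro h
  exfalso
  unfold mods4 at h
  omega

lemma dsum_phi (x : List ℤ) : ∀ (p p' k : ℤ), (k - p' - p - 1) % 4 = 0 →
    dsum p x + dsum p' (phi k x) = 5 * x.length := by
  induction x with
  | nil => intro p p' k _; simp [dsum, phi]
  | cons a l ih =>
    intro p p' k hm
    simp only [phi, dsum, List.length_cons]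
    have key : mods4 (a - p) + mods4 (mods4 (k - a) - p') = 5 := by
      unfold mods4; omega
    have hrec := ih a (mods4 (k - a)) (k + 1) (by unfold mods4; omega)
    push_cast
    push_cast at hrec
    linarith

/- ---- counting ---- -/
def allQ : ℕ → Finset (List ℤ)
  | 0 => {[]}
  | n + 1 => Finset.image₂ List.cons ({1, 2, 3, 4} : Finset ℤ) (allQ n)

lemma mem_allQ (n : ℕ) (x : List ℤ) : x ∈ allQ n ↔ x.length = n ∧ IsQ x := by
  induction n generalizing x with
  | zero =>
    simp only [allQ, Finset.mem_singleton, List.length_eq_zero_iff]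
    constructor
    · rintro rfl; exact ⟨rfl, by intro a ha; simp at ha⟩
    · rintro ⟨rfl, _⟩; rfl
  | succ n ih =>
    simp only [allQ, Finset.mem_image₂]
    constructor
    · rintro ⟨a, ha, l, hl, rfl⟩
      obtain ⟨hlen, hq⟩ := (ih l).mp hl
      refine ⟨by simp [hlen], ?_⟩
      intro b hb
      rcases List.mem_cons.mp hb with h | h
      · subst h; simp only [Finset.mem_insert, Finset.mem_singleton] at ha; omega
      · exact hq b h
    · rintro ⟨hlen, hq⟩
      cases x with
      | nil => simp at hlen
      | cons a l =>
        refine ⟨a, ?_, l, (ih l).mpr ⟨by simpa using hlen, fun b hb => hq b (List.mem_cons_of_mem _ hb)⟩, rfl⟩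
        have := hq a (List.mem_cons_self)
        simp only [Finset.mem_insert, Finset.mem_singleton]
        omega

lemma card_allQ (n : ℕ) : (allQ n).card = 4 ^ n := by
  induction n with
  | zero => simp [allQ]
  | succ n ih =>
    have hinj : Function.Injective2 (List.cons (α := ℤ)) := by
      intro a b c d h; injection h with h1 h2; exact ⟨h1, h2⟩
    rw [allQ, Finset.card_image₂ hinj, ih]
    norm_num [pow_succ]
    ring

section counting
variable (n : ℕ) (T : ℤ)

noncomputable def Wfin : Finset (List ℤ) := (allQ n).filter (fun x => dsum 0 x ≤ T)

lemma Wfin_half (hn : 0 < n) (hT1 : (5 * n : ℤ) ≤ 2 * T) :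
    4 ^ n ≤ 2 * (Wfin n T).card := by
  classical
  have hsub : Wfin n T ⊆ allQ n := Finset.filter_subset _ _
  have hinj : ∀ x ∈ allQ n \ Wfin n T, phi 1 x ∈ Wfin n T := by
    intro x hx
    rw [Finset.mem_sdiff, Wfin, Finset.mem_filter] at hx
    obtain ⟨hxa, hxn⟩ := hx
    obtain ⟨hlen, hq⟩ := (mem_allQ n x).mp hxa
    have hgt : ¬ dsum 0 x ≤ T := fun h => hxn ⟨hxa, h⟩
    have hd := dsum_phi x 0 0 1 (by norm_num)
    rw [Wfin, Finset.mem_filter, mem_allQ]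
    refine ⟨⟨by simp [hlen], phi_isQ _ _⟩, ?_⟩
    rw [hlen] at hd
    omega
  have hinjOn : Set.InjOn (phi 1) ↑(allQ n \ Wfin n T) := by
    intro x hx y hy hxy
    simp only [Finset.coe_sdiff, Set.mem_diff, Finset.mem_coe] at hx hy
    have hqx := ((mem_allQ n x).mp hx.1).2
    have hqy := ((mem_allQ n y).mp hy.1).2
    calc x = phi 1 (phi 1 x) := (phi_phi 1 x hqx).symm
    _ = phi 1 (phi 1 y) := by rw [hxy]
    _ = y := phi_phi 1 y hqy
  have hcard : (allQ n \ Wfin n T).card ≤ (Wfin n T).card :=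
    Finset.card_le_card_of_injOn (phi 1) hinj hinjOn
  have := Finset.card_sdiff_add_card_eq_card hsub
  rw [← card_allQ n]
  omega

end counting

/- ---- sublist decomposition ---- -/
lemma sublist_succ {z x : List ℤ} (h : z.Sublist x) (hl : z.length + 1 = x.length) :
    ∃ u c r, x = u ++ c :: r ∧ z = u ++ r := by
  induction h with
  | slnil => simp at hl
  | @cons l₁ l₂ a h ih =>
    have : l₁.length ≤ l₂.length := h.length_le
    simp only [List.length_cons] at hl
    have heq : l₁ = l₂ := h.eq_of_length (by omega)
    exact ⟨[], a, l₂, by simp, by simp [heq]⟩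
  | @cons_cons l₁ l₂ a h ih =>
    simp only [List.length_cons] at hl
    obtain ⟨u, c, r, h1, h2⟩ := ih (by omega)
    exact ⟨a :: u, c, r, by simp [h1], by simp [h2]⟩

/- ---- replicate helpers ---- -/
lemma sum_zero_replicate (l : List ℕ) (h : l.sum = 0) : l = List.replicate l.length 0 :=
  List.eq_replicate_of_mem (by
    intro b hb
    exact List.sum_eq_zero_iff.mp h b hb)

lemma sum_len_replicate (l : List ℕ) (hle : ∀ t ∈ l, t ≤ 1) (h : l.sum = l.length) :
    l = List.replicate l.length 1 := by
  induction l with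
  | nil => simp
  | cons a l ih =>
    have ha : a ≤ 1 := hle a (List.mem_cons_self)
    have hsum : l.sum ≤ l.length := by
      have := List.sum_le_card_nsmul l 1 (fun x hx => hle x (List.mem_cons_of_mem _ hx))
      simpa using this
    simp only [List.sum_cons, List.length_cons] at h
    have ha1 : a = 1 := by omega
    subst ha1
    simp only [List.length_cons, List.replicate_succ, List.cons.injEq, true_and]
    exact ih (fun x hx => hle x (List.mem_cons_of_mem _ hx)) (by omega)

lemma replicate_shift (m : ℕ) (a : α) (A B : List α) :
    A ++ a :: (List.replicate m a ++ B) = (A ++ List.replicate m a) ++ a :: B := by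
  have : a :: (List.replicate m a ++ B) = List.replicate (m+1) a ++ B := by
    simp [List.replicate_succ]
  rw [this]
  have : List.replicate m a ++ a :: B = List.replicate (m+1) a ++ B := by
    rw [List.replicate_succ']
    simp
  simp only [List.append_assoc]
  rw [this]

/- ---- vtSyn of an insertion ---- -/
lemma insert_vt (γ : List ℕ) (i : ℕ) (a : ℕ) (hi : i ≤ γ.length) :
    vtSyn (γ.take i ++ a :: γ.drop i) = vtSyn γ + (i + 1) * a + (γ.drop i).sum := by
  have hlen : (γ.take i).length = i := by simp; omega
  have hg2 : vtSyn γ = vtSyn (γ.take i) + i * (γ.drop i).sum + vtSyn (γ.drop i) := by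
    conv_lhs => rw [← List.take_append_drop i γ]
    rw [vtSyn_append, hlen]
  rw [vtSyn_append, vtSyn_cons, hlen, hg2, List.sum_cons]
  ring

/- ---- two insertions into the same word ---- -/
lemma two_inserts (γ : List ℕ) (hγ : ∀ t ∈ γ, t ≤ 1) (i j a b : ℕ) (ha : a ≤ 1) (hb : b ≤ 1)
    (hij : i ≤ j) (hj : j ≤ γ.length) :
    γ.take i ++ a :: γ.drop i = γ.take j ++ b :: γ.drop j ∨
    ((vtSyn (γ.take i ++ a :: γ.drop i) : ℤ) ≠ vtSyn (γ.take j ++ b :: γ.drop j) ∧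
      (vtSyn (γ.take i ++ a :: γ.drop i) : ℤ) - vtSyn (γ.take j ++ b :: γ.drop j) < γ.length + 2 ∧
      -((γ.length : ℤ) + 2) < (vtSyn (γ.take i ++ a :: γ.drop i) : ℤ) - vtSyn (γ.take j ++ b :: γ.drop j)) := by
  set S : List ℕ := (γ.drop i).take (j - i) with hS
  have hdd : (γ.drop i).drop (j - i) = γ.drop j := by
    rw [List.drop_drop]; congr 1; omega
  have hdi : γ.drop i = S ++ γ.drop j := by
    calc γ.drop i = (γ.drop i).take (j - i) ++ (γ.drop i).drop (j - i) :=
          (List.take_append_drop _ _).symm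
    _ = S ++ γ.drop j := by rw [hdd]
  have hSlen : S.length = j - i := by
    simp [hS]; omega
  have hSsub : S.Sublist γ := ((List.take_sublist _ _).trans (List.drop_sublist _ _))
  have hSle : ∀ t ∈ S, t ≤ 1 := fun t ht => hγ t (hSsub.subset ht)
  have hSsum : S.sum ≤ j - i := by
    have := List.sum_le_card_nsmul S 1 hSle
    simp [hSlen] at this
    omega
  have htj : γ.take j = γ.take i ++ S := by
    have : j = i + (j - i) := by omega
    rw [this, List.take_add]
  have hv1 := insert_vt γ i a (by omega)
  have hv2 := insert_vt γ j b hj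
  have hsum : (γ.drop i).sum = S.sum + (γ.drop j).sum := by rw [hdi, List.sum_append]
  -- the case where the two insertions coincide
  have heqcase : ∀ e : ℕ, a = e → b = e → S = List.replicate (j - i) e →
      γ.take i ++ a :: γ.drop i = γ.take j ++ b :: γ.drop j := by
    rintro e rfl rfl hrep
    rw [htj, hdi, hrep]
    exact replicate_shift (j - i) _ _ _
  rw [hsum] at hv1
  interval_cases a <;> interval_cases b
  · -- a = 0, b = 0
    by_cases h0 : S.sum = 0
    · exact Or.inl (heqcase 0 rfl rfl (by rw [← hSlen]; exact sum_zero_replicate S h0))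
    · exact Or.inr ⟨by omega, by omega, by omega⟩
  · exact Or.inr ⟨by omega, by omega, by omega⟩
  · exact Or.inr ⟨by omega, by omega, by omega⟩
  · -- a = 1, b = 1
    by_cases h1 : S.sum = j - i
    · refine Or.inl (heqcase 1 rfl rfl ?_)
      rw [← hSlen]
      exact sum_len_replicate S hSle (by omega)
    · exact Or.inr ⟨by omega, by omega, by omega⟩

/- ---- auxSeq of an insertion ---- -/
lemma bit_trans (p c b : ℤ) (h : (if p ≤ b then (1:ℕ) else 0) ≠ (if c ≤ b then (1:ℕ) else 0)) :
    (if p ≤ b then (1:ℕ) else 0) = (if p ≤ c then (1:ℕ) else 0) := by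
  split_ifs at h ⊢ <;> omega

lemma aux_insert (u r : List ℤ) (c : ℤ) (h : u ++ r ≠ []) :
    ∃ (δ k : ℕ), δ ≤ 1 ∧ k ≤ (auxSeq (u ++ r)).length ∧
      auxSeq (u ++ c :: r) = (auxSeq (u ++ r)).take k ++ δ :: (auxSeq (u ++ r)).drop k := by
  rcases List.eq_nil_or_concat u with rfl | ⟨u', p, rfl⟩
  · -- u = []
    cases r with
    | nil => simp at h
    | cons b r' =>
      refine ⟨if c ≤ b then 1 else 0, 0, by split <;> omega, by omega, ?_⟩
      simp
  · -- u = u' ++ [p]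
    simp only [List.concat_eq_append] at h ⊢
    cases r with
    | nil =>
      refine ⟨if p ≤ c then 1 else 0, (auxSeq (u' ++ [p])).length, by split <;> omega, ?_, ?_⟩
      · simp
      · rw [List.append_nil, List.take_length, List.drop_length]
        have : u' ++ [p] ++ [c] = u' ++ p :: [c] := by simp
        rw [this, auxSeq_append u' p [c]]
        simp
    | cons b r' =>
      have h1 : u' ++ [p] ++ c :: b :: r' = u' ++ [p] ++ [c] ++ (b :: r') := by simp
      have haux1 : auxSeq (u' ++ [p] ++ c :: b :: r') =
          auxSeq (u' ++ [p]) ++ (if p ≤ c then 1 else 0) :: (if c ≤ b then 1 else 0) :: auxSeq (b :: r') := by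
        rw [auxSeq_append (u' ++ [p]) c (b :: r')]
        have e1 : u' ++ [p] ++ [c] = u' ++ p :: [c] := by simp
        rw [e1, auxSeq_append u' p [c]]
        simp
      have haux2 : auxSeq (u' ++ [p] ++ b :: r') =
          (auxSeq (u' ++ [p]) ++ [if p ≤ b then 1 else 0]) ++ auxSeq (b :: r') := by
        rw [auxSeq_append (u' ++ [p]) b r']
        have e1 : u' ++ [p] ++ [b] = u' ++ p :: [b] := by simp
        rw [e1, auxSeq_append u' p [b]]
        simp
      set L := auxSeq (u' ++ [p]) with hLdef
      by_cases hbit : (if p ≤ b then (1:ℕ) else 0) = (if c ≤ b then (1:ℕ) else 0)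
      · -- insert (bit p c) at position L.length
        refine ⟨if p ≤ c then 1 else 0, L.length, by split <;> omega, ?_, ?_⟩
        · rw [haux2]; simp
        · rw [haux1, haux2, List.append_assoc, List.singleton_append,
            List.take_left, List.drop_left]
          rw [← hbit]
      · -- insert (bit c b) at position L.length + 1
        have hbit2 := bit_trans p c b hbit
        refine ⟨if c ≤ b then 1 else 0, L.length + 1, by split <;> omega, ?_, ?_⟩
        · rw [haux2]; simp
        · have hlen2 : (L ++ [if p ≤ b then (1:ℕ) else 0]).length = L.length + 1 := by simp
          rw [haux1, haux2, ← hlen2, List.take_left, List.drop_left]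
          rw [hbit2]
          simp

/- ---- chain lemma ---- -/
lemma chainLem : ∀ (v : List ℤ) (a c : ℤ) (w : List ℤ),
    auxSeq (a :: v ++ w) = auxSeq (v ++ c :: w) →
    List.Chain' (· ≤ ·) (a :: v ++ [c]) ∨ List.Chain' (· > ·) (a :: v ++ [c]) := by
  intro v
  induction v with
  | nil =>
    intro a c w _
    rcases le_or_gt a c with h | h
    · exact Or.inl (by simp [List.Chain', List.isChain_cons_cons, h])
    · exact Or.inr (by simp [List.Chain', List.isChain_cons_cons, h])
  | cons t v' ih =>
    intro a c w hyp
    cases v' with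
    | nil =>
      simp only [List.cons_append, List.nil_append, auxSeq_cons_cons] at hyp
      injection hyp with h1 h2
      rcases le_or_gt t c with htc | htc
      · left
        have hat : a ≤ t := by by_contra hh; simp [hh, htc] at h1
        simp [List.Chain', List.isChain_cons_cons, hat, htc]
      · right
        have hat : t < a := by by_contra hh; simp [not_lt.mp hh, htc.not_ge] at h1
        simp [List.Chain', List.isChain_cons_cons, hat, htc]
    | cons s v'' =>
      simp only [List.cons_append, auxSeq_cons_cons] at hyp ⊢
      injection hyp with h1 h2
      have hch := ih t c w (by simpa using h2)
      simp only [List.cons_append] at hch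
      rcases hch with hch | hch
      · left
        have hts : t ≤ s := (List.isChain_cons_cons.mp hch).1
        have hat : a ≤ t := by by_contra hh; simp [hh, hts] at h1
        exact List.isChain_cons_cons.mpr ⟨hat, hch⟩
      · right
        have hts : t > s := (List.isChain_cons_cons.mp hch).1
        have hat : a > t := by by_contra hh; simp [not_lt.mp hh, hts.not_ge] at h1
        exact List.isChain_cons_cons.mpr ⟨hat, hch⟩

/- ---- aux equality implies word equality ---- -/
lemma chain_conc (v : List ℤ) (c : ℤ)
    (h : List.Chain' (· ≤ ·) (c :: v ++ [c]) ∨ List.Chain' (· > ·) (c :: v ++ [c])) :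
    v = List.replicate v.length c := by
  rcases h with h | h
  · rw [List.Chain', List.isChain_iff_pairwise, List.cons_append] at h
    refine List.eq_replicate_of_mem ?_
    intro b hb
    rw [List.pairwise_cons] at h
    have h1 : c ≤ b := h.1 b (by simp [hb])
    have h2 : b ≤ c := by
      have := h.2
      rw [List.pairwise_append] at this
      exact this.2.2 b hb c (by simp)
    omega
  · exfalso
    rw [List.Chain', List.isChain_iff_pairwise, List.cons_append, List.pairwise_cons] at h
    exact absurd (h.1 c (by simp)) (lt_irrefl c)

lemma aux_eq_imp (u v w : List ℤ) (c : ℤ) (hv : v ≠ [])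
    (heq : auxSeq (u ++ c :: (v ++ w)) = auxSeq (u ++ v ++ c :: w)) :
    u ++ c :: (v ++ w) = u ++ v ++ c :: w := by
  obtain ⟨v0, v', rfl⟩ := List.exists_cons_of_ne_nil hv
  have key : auxSeq (c :: ((v0 :: v') ++ w)) = auxSeq ((v0 :: v') ++ c :: w) := by
    cases u with
    | nil => simpa using heq
    | cons a u' =>
      rw [show (a :: u') ++ c :: ((v0 :: v') ++ w) = (a :: u') ++ c :: (v0 :: v' ++ w) by simp,
        auxSeq_append (a :: u') c (v0 :: v' ++ w)] at heq
      rw [show (a :: u') ++ (v0 :: v') ++ c :: w = (a :: u') ++ v0 :: (v' ++ c :: w) by simp,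
        auxSeq_append (a :: u') v0 (v' ++ c :: w)] at heq
      have hlen : (auxSeq ((a :: u') ++ [c])).length = (auxSeq ((a :: u') ++ [v0])).length := by
        simp
      have := List.append_inj_right heq hlen
      simpa using this
  have hrep := chain_conc (v0 :: v') c (chainLem (v0 :: v') c c w key)
  rw [hrep, List.append_assoc, replicate_shift, List.append_assoc]

/- ---- Tenengolts core ---- -/
lemma int_zero_of_dvd (n D : ℤ) (hd : n ∣ D) (h1 : D < n) (h2 : -n < D) : D = 0 :=
  Int.eq_zero_of_abs_lt_dvd hd (abs_lt.mpr ⟨h2, h1⟩)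

lemma tenengolts_core (n : ℕ) (u v w : List ℤ) (c : ℤ) (hv : v ≠ [])
    (hn : (u ++ c :: (v ++ w)).length = n)
    (hne : u ++ c :: (v ++ w) ≠ u ++ v ++ c :: w)
    (hcode : ((vtSyn (auxSeq (u ++ c :: (v ++ w))) : ℕ) : ZMod n) =
             ((vtSyn (auxSeq (u ++ v ++ c :: w)) : ℕ) : ZMod n)) : False := by
  set x := u ++ c :: (v ++ w) with hx
  set y := u ++ v ++ c :: w with hy
  have hzne : u ++ (v ++ w) ≠ [] := by
    intro h
    rcases List.append_eq_nil_iff.mp h with ⟨_, h2⟩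
    exact hv (List.append_eq_nil_iff.mp h2).1
  obtain ⟨δ₁, k₁, hδ₁, hk₁, he₁⟩ := aux_insert u (v ++ w) c hzne
  obtain ⟨δ₂, k₂, hδ₂, hk₂, he₂⟩ := aux_insert (u ++ v) w c (by simpa [List.append_assoc] using hzne)
  rw [List.append_assoc u v w] at he₂ hk₂
  set γ := auxSeq (u ++ (v ++ w)) with hγ
  have hxa : auxSeq x = γ.take k₁ ++ δ₁ :: γ.drop k₁ := he₁
  have hya : auxSeq y = γ.take k₂ ++ δ₂ :: γ.drop k₂ := he₂
  have hγle := auxSeq_le_one (u ++ (v ++ w))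
  have hvpos : 1 ≤ v.length := List.length_pos_iff.mpr hv
  have hxlen : u.length + v.length + w.length + 1 = n := by
    rw [hx] at hn; simp at hn; omega
  have hγlen : γ.length = n - 2 := by
    rw [hγ, length_auxSeq]; simp; omega
  have hn2 : 2 ≤ n := by omega
  -- aux x = aux y leads to x = y
  have hauxne : auxSeq x ≠ auxSeq y := by
    intro hh
    exact hne (aux_eq_imp u v w c hv (by rw [← hx, ← hy]; exact hh))
  -- both orders
  have hdvd : (n : ℤ) ∣ ((vtSyn (auxSeq x) : ℤ) - (vtSyn (auxSeq y) : ℤ)) := by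
    rw [ZMod.natCast_eq_natCast_iff] at hcode
    have h := hcode.dvd
    rw [show ((vtSyn (auxSeq x) : ℤ) - (vtSyn (auxSeq y) : ℤ))
        = -((vtSyn (auxSeq y) : ℤ) - (vtSyn (auxSeq x) : ℤ)) by ring]
    exact dvd_neg.mpr h
  rcases le_total k₁ k₂ with hk | hk
  · rcases two_inserts γ hγle k₁ k₂ δ₁ δ₂ hδ₁ hδ₂ hk hk₂ with h | ⟨h1, h2, h3⟩
    · exact hauxne (by rw [hxa, hya, h])
    · rw [← hxa, ← hya] at h1 h2 h3
      rw [hγlen] at h2 h3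
      have := int_zero_of_dvd n _ hdvd (by omega) (by omega)
      omega
  · rcases two_inserts γ hγle k₂ k₁ δ₂ δ₁ hδ₂ hδ₁ hk hk₁ with h | ⟨h1, h2, h3⟩
    · exact hauxne (by rw [hxa, hya]; exact h.symm)
    · rw [← hya, ← hxa] at h1 h2 h3
      rw [hγlen] at h2 h3
      have := int_zero_of_dvd n _ hdvd (by omega) (by omega)
      omega

/- ---- no common subsequence ---- -/
lemma split_prefix {u1 r1 u2 r2 : List ℤ} (h : u1 ++ r1 = u2 ++ r2)
    (hle : u1.length ≤ u2.length) : ∃ v, u2 = u1 ++ v ∧ r1 = v ++ r2 := by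
  rcases List.append_eq_append_iff.mp h with ⟨a', ha1, ha2⟩ | ⟨c', hc1, hc2⟩
  · exact ⟨a', ha1, ha2⟩
  · have hlen : c'.length = 0 := by
      have := congrArg List.length hc1
      simp at this; omega
    have hnil : c' = [] := List.length_eq_zero_iff.mp hlen
    subst hnil
    simp only [List.append_nil] at hc1
    simp only [List.nil_append] at hc2
    exact ⟨[], by simp [hc1], by simp [hc2]⟩

lemma no_common_ordered (n : ℕ) (x y z : List ℤ) (u1 u2 r1 r2 : List ℤ) (c : ℤ)
    (hx : x = u1 ++ c :: r1) (hy : y = u2 ++ c :: r2)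
    (hz1 : z = u1 ++ r1) (hz2 : z = u2 ++ r2)
    (hle : u1.length ≤ u2.length)
    (hxn : x.length = n)
    (hne : x ≠ y)
    (hv : ((vtSyn (auxSeq x) : ℕ) : ZMod n) = ((vtSyn (auxSeq y) : ℕ) : ZMod n)) : False := by
  obtain ⟨v, hu2, hr1⟩ := split_prefix (hz1 ▸ hz2 : u1 ++ r1 = u2 ++ r2) hle
  cases v with
  | nil =>
    simp only [List.append_nil] at hu2
    simp only [List.nil_append] at hr1
    exact hne (by rw [hx, hy, hu2, hr1])
  | cons v0 v' =>
    have hx' : x = u1 ++ c :: ((v0 :: v') ++ r2) := by rw [hx, hr1]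
    have hy' : y = u1 ++ (v0 :: v') ++ c :: r2 := by rw [hy, hu2]
    refine tenengolts_core n u1 (v0 :: v') r2 c (by simp) (by rw [← hx']; exact hxn) ?_ ?_
    · rw [← hx', ← hy']; exact hne
    · rw [← hx', ← hy']; exact hv

lemma no_common (n : ℕ) (x y z : List ℤ)
    (hxn : x.length = n) (hyn : y.length = n)
    (hqx : IsQ x) (hqy : IsQ y) (hne : x ≠ y)
    (hs : ((x.sum : ℤ) : ZMod 4) = ((y.sum : ℤ) : ZMod 4))
    (hv : ((vtSyn (auxSeq x) : ℕ) : ZMod n) = ((vtSyn (auxSeq y) : ℕ) : ZMod n))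
    (hzl : z.length + 1 = n) (hzx : z.Sublist x) (hzy : z.Sublist y) : False := by
  obtain ⟨u1, c, r1, hx, hz1⟩ := sublist_succ hzx (by omega)
  obtain ⟨u2, c', r2, hy, hz2⟩ := sublist_succ hzy (by omega)
  -- the inserted symbols agree
  have hcc : c = c' := by
    have hcx : 1 ≤ c ∧ c ≤ 4 := hqx c (by rw [hx]; exact List.mem_append_right _ (List.mem_cons_self))
    have hcy : 1 ≤ c' ∧ c' ≤ 4 := hqy c' (by rw [hy]; exact List.mem_append_right _ (List.mem_cons_self))
    have hsx : x.sum = u1.sum + c + r1.sum := by rw [hx]; simp; ring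
    have hsy : y.sum = u2.sum + c' + r2.sum := by rw [hy]; simp; ring
    have hz12 : u1.sum + r1.sum = u2.sum + r2.sum := by
      have h1 : z.sum = u1.sum + r1.sum := by rw [hz1]; simp
      have h2 : z.sum = u2.sum + r2.sum := by rw [hz2]; simp
      omega
    have hdvd : (4 : ℤ) ∣ (x.sum - y.sum) := by
      have : ((x.sum - y.sum : ℤ) : ZMod 4) = 0 := by push_cast [hs]; ring
      exact (ZMod.intCast_zmod_eq_zero_iff_dvd _ 4).mp this
    omega
  subst hcc
  rcases le_total u1.length u2.length with h | h
  · exact no_common_ordered n x y z u1 u2 r1 r2 c hx hy hz1 hz2 h hxn hne hv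
  · exact no_common_ordered n y x z u2 u1 r2 r1 c hy hx hz2 hz1 h hyn (Ne.symm hne) hv.symm

/- ---- supersequence reduction ---- -/
lemma super_ordered (x y t : List ℤ) (hne : x ≠ y)
    (u1 u2 r1 r2 : List ℤ) (c c' : ℤ)
    (ht1 : t = u1 ++ c :: r1) (hx1 : x = u1 ++ r1)
    (ht2 : t = u2 ++ c' :: r2) (hy1 : y = u2 ++ r2)
    (h : u1.length ≤ u2.length) :
    ∃ z : List ℤ, z.length + 1 = x.length ∧ z.Sublist x ∧ z.Sublist y := by
  obtain ⟨v, hu2, hr1⟩ := split_prefix (ht1 ▸ ht2 : u1 ++ c :: r1 = u2 ++ c' :: r2) h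
  cases v with
  | nil =>
    simp only [List.append_nil] at hu2
    simp only [List.nil_append] at hr1
    injection hr1 with hc hr
    exact absurd (by rw [hx1, hy1, hu2, hr]) hne
  | cons v0 s =>
    injection hr1 with hc hr
    subst hc
    refine ⟨u1 ++ (s ++ r2), ?_, ?_, ?_⟩
    · rw [hx1, hr]; simp; omega
    · rw [hx1, hr]
      exact ((List.sublist_cons_self c' r2).append_left s).append_left u1
    · rw [hy1, hu2]
      have hy2 : (u1 ++ c :: s) ++ r2 = u1 ++ c :: (s ++ r2) := by simp
      rw [hy2]
      exact (List.sublist_cons_self c (s ++ r2)).append_left u1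

lemma super_common (x y t : List ℤ) (hne : x ≠ y)
    (hx : x.Sublist t) (hy : y.Sublist t)
    (hxl : x.length + 1 = t.length) (hyl : y.length + 1 = t.length) :
    ∃ z : List ℤ, z.length + 1 = x.length ∧ z.Sublist x ∧ z.Sublist y := by
  obtain ⟨u1, c, r1, ht1, hx1⟩ := sublist_succ hx hxl
  obtain ⟨u2, c', r2, ht2, hy1⟩ := sublist_succ hy hyl
  rcases le_total u1.length u2.length with h | h
  · exact super_ordered x y t hne u1 u2 r1 r2 c c' ht1 hx1 ht2 hy1 h
  · obtain ⟨z, h1, h2, h3⟩ := super_ordered y x t (Ne.symm hne) u2 u1 r2 r1 c' c ht2 hy1 ht1 hx1 h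
    exact ⟨z, by omega, h3, h2⟩

lemma balls_disjoint (n : ℕ) (x y : List ℤ)
    (hxn : x.length = n) (hyn : y.length = n)
    (hqx : IsQ x) (hqy : IsQ y) (hne : x ≠ y)
    (hs : ((x.sum : ℤ) : ZMod 4) = ((y.sum : ℤ) : ZMod 4))
    (hv : ((vtSyn (auxSeq x) : ℕ) : ZMod n) = ((vtSyn (auxSeq y) : ℕ) : ZMod n)) :
    Disjoint (ball x) (ball y) := by
  rw [Set.disjoint_left]
  intro t htx hty
  simp only [ball, Set.mem_setOf_eq] at htx hty
  rcases htx with rfl | ⟨hl1, hsub1⟩ | ⟨hl1, hq1, hsup1⟩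
  · rcases hty with h | ⟨hl2, _⟩ | ⟨hl2, _, _⟩
    · exact hne h
    · omega
    · omega
  · rcases hty with rfl | ⟨hl2, hsub2⟩ | ⟨hl2, _, _⟩
    · omega
    · exact no_common n x y t hxn hyn hqx hqy hne hs hv (by omega) hsub1 hsub2
    · omega
  · rcases hty with rfl | ⟨hl2, _⟩ | ⟨hl2, _, hsup2⟩
    · omega
    · omega
    · obtain ⟨z, hzl, hzx, hzy⟩ := super_common x y t hne hsup1 hsup2 (by omega) (by omega)
      exact no_common n x y z hxn hyn hqx hqy hne hs hv (by omega) hzx hzy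

theorem exists_code_aux (n : ℕ) (hn : 0 < n) (T : ℤ)
    (hT1 : (5 * n : ℤ) ≤ 2 * T) (hT2 : T ≤ 4 * n) :
    ∃ C : Set (List ℤ),
      (∀ x ∈ C, x.length = n ∧ IsQ x) ∧
      (∀ x ∈ C, (synTime x : ℤ) ≤ T) ∧
      (C.Pairwise fun x y => Disjoint (ball x) (ball y)) ∧
      (4 : ℝ) ^ (n - 1) / (2 * n) ≤ (C.ncard : ℝ) ∧
      2 * (n : ℝ) - Real.logb 2 (C.ncard : ℝ) ≤ 3 + Real.logb 2 n := by
  classical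
  haveI : NeZero n := ⟨hn.ne'⟩
  set F : List ℤ → ZMod n × ZMod 4 :=
    fun x => (((vtSyn (auxSeq x) : ℕ) : ZMod n), ((x.sum : ℤ) : ZMod 4)) with hF
  set Wf : Finset (List ℤ) := Wfin n T with hWf
  have hhalf : 4 ^ n ≤ 2 * Wf.card := Wfin_half n T hn hT1
  have hWne : Wf.Nonempty := by
    rw [← Finset.card_pos]
    have : 0 < 4 ^ n := Nat.pow_pos (by norm_num)
    omega
  -- pigeonhole: a fiber of F of maximal size
  obtain ⟨b, hbI, hmax⟩ := Finset.exists_max_image (Wf.image F)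
    (fun b => (Wf.filter (fun x => F x = b)).card) (hWne.image F)
  set Cf : Finset (List ℤ) := Wf.filter (fun x => F x = b) with hCf
  have hfibers : Wf.card = ∑ b' ∈ Wf.image F, (Wf.filter (fun x => F x = b')).card :=
    Finset.card_eq_sum_card_fiberwise (fun x hx => Finset.mem_image_of_mem F hx)
  have himgcard : (Wf.image F).card ≤ 4 * n := by
    have h1 : (Wf.image F).card ≤ Fintype.card (ZMod n × ZMod 4) := Finset.card_le_univ _
    have h2 : Fintype.card (ZMod n × ZMod 4) = n * 4 := by
      rw [Fintype.card_prod, ZMod.card, ZMod.card]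
    omega
  have hsumle : ∑ b' ∈ Wf.image F, (Wf.filter (fun x => F x = b')).card
      ≤ (Wf.image F).card * Cf.card := by
    rw [← smul_eq_mul]
    exact Finset.sum_le_card_nsmul _ _ _ (fun b' hb' => hmax b' hb')
  have hkey : 4 ^ n ≤ 8 * n * Cf.card := by
    have h1 : Wf.card ≤ 4 * n * Cf.card := by
      calc Wf.card = _ := hfibers
      _ ≤ (Wf.image F).card * Cf.card := hsumle
      _ ≤ 4 * n * Cf.card := Nat.mul_le_mul_right _ himgcard
    calc 4 ^ n ≤ 2 * Wf.card := hhalf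
    _ ≤ 2 * (4 * n * Cf.card) := Nat.mul_le_mul_left 2 h1
    _ = 8 * n * Cf.card := by ring
  have hCfpos : 0 < Cf.card := by
    have : 0 < 4 ^ n := Nat.pow_pos (by norm_num)
    by_contra hc
    simp only [not_lt, Nat.le_zero] at hc
    rw [hc, Nat.mul_zero] at hkey
    omega
  refine ⟨↑Cf, ?_, ?_, ?_, ?_, ?_⟩
  · intro x hx
    simp only [Finset.coe_filter, Set.mem_setOf_eq, hCf, hWf, Wfin, Finset.mem_filter] at hx
    exact (mem_allQ n x).mp hx.1.1
  · intro x hx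
    simp only [Finset.coe_filter, Set.mem_setOf_eq, hCf, hWf, Wfin, Finset.mem_filter] at hx
    have hq : IsQ x := ((mem_allQ n x).mp hx.1.1).2
    have := synTime_le x hq
    have := hx.1.2
    omega
  · intro x hx y hy hne
    simp only [Finset.mem_coe, hCf, Finset.mem_filter] at hx hy
    have hqx := (mem_allQ n x).mp (Finset.mem_filter.mp hx.1).1
    have hqy := (mem_allQ n y).mp (Finset.mem_filter.mp hy.1).1
    have hFx : F x = b := hx.2
    have hFy : F y = b := hy.2
    have hFeq : F x = F y := by rw [hFx, hFy]
    rw [hF] at hFeq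
    simp only [Prod.mk.injEq] at hFeq
    exact balls_disjoint n x y hqx.1 hqy.1 hqx.2 hqy.2 hne hFeq.2 hFeq.1
  · -- cardinality bound
    rw [Set.ncard_coe_finset]
    have hc : ((4 : ℝ)) ^ n ≤ 8 * n * Cf.card := by
      calc ((4 : ℝ)) ^ n = ((4 ^ n : ℕ) : ℝ) := by push_cast; ring
      _ ≤ ((8 * n * Cf.card : ℕ) : ℝ) := by exact_mod_cast hkey
      _ = 8 * n * Cf.card := by push_cast; ring
    have hnpos : (0 : ℝ) < n := by exact_mod_cast hn
    rw [div_le_iff₀ (by positivity)]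
    have h4 : (4 : ℝ) ^ (n - 1) = 4 ^ n / 4 := by
      cases n with
      | zero => omega
      | succ m => rw [pow_succ]; simp
    rw [h4, div_le_iff₀ (show (0:ℝ) < 4 by norm_num)]
    nlinarith [hc]
  · -- redundancy bound
    rw [Set.ncard_coe_finset]
    have hnpos : (0 : ℝ) < n := by exact_mod_cast hn
    have hb : (4 : ℝ) ^ n / (8 * n) ≤ Cf.card := by
      rw [div_le_iff₀ (by positivity)]
      calc ((4 : ℝ)) ^ n = ((4 ^ n : ℕ) : ℝ) := by push_cast; ring
      _ ≤ ((8 * n * Cf.card : ℕ) : ℝ) := by exact_mod_cast hkey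
      _ = (Cf.card : ℝ) * (8 * n) := by push_cast; ring
    have hbpos : (0 : ℝ) < 4 ^ n / (8 * n) := by positivity
    have hlog : Real.logb 2 ((4 : ℝ) ^ n / (8 * n)) ≤ Real.logb 2 (Cf.card : ℝ) :=
      Real.logb_le_logb_of_le (by norm_num) hbpos hb
    have h1 : Real.logb 2 ((4:ℝ) ^ n) = 2 * n := by
      rw [show (4:ℝ) = 2 ^ (2:ℕ) by norm_num, ← pow_mul, Real.logb_pow,
        Real.logb_self_eq_one (by norm_num)]
      push_cast; ring
    have h8 : Real.logb 2 ((8:ℝ) * n) = 3 + Real.logb 2 n := by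
      rw [Real.logb_mul (by norm_num) (by exact_mod_cast hn.ne'),
        show (8:ℝ) = 2 ^ (3:ℕ) by norm_num, Real.logb_pow,
        Real.logb_self_eq_one (by norm_num)]
      push_cast; ring
    have h2 : Real.logb 2 ((4:ℝ) ^ n / (8 * n)) = 2 * n - (3 + Real.logb 2 n) := by
      rw [Real.logb_div (by positivity) (by positivity), h1, h8]
    linarith [hlog, h2]


/-- for `5n ≤ 2T` and `T ≤ 4n` there exists an `(n,T,B)`-synthesis
code `C ⊆ Σ^n` with `|C| ≥ 4^{n-1}/(2n)`; hence its redundancy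
`2n - log₂ |C|` is at most `3 + log₂ n` bits. -/
theorem exists_synthesis_code_2_5n (n : ℕ) (hn : 0 < n) (T : ℤ)
    (hT1 : (5 * n : ℤ) ≤ 2 * T) (hT2 : T ≤ 4 * n) :
    ∃ C : Set (List ℤ),
      (∀ x ∈ C, x.length = n ∧ IsQ x) ∧
      (∀ x ∈ C, (synTime x : ℤ) ≤ T) ∧
      (C.Pairwise fun x y => Disjoint (ball x) (ball y)) ∧
      (4 : ℝ) ^ (n - 1) / (2 * n) ≤ (C.ncard : ℝ) ∧
      2 * (n : ℝ) - Real.logb 2 (C.ncard : ℝ) ≤ 3 + Real.logb 2 n := by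
  exact exists_code_aux n hn T hT1 hT2
end

section
/- For integers n ≥ 2, T, and k ∈ {1,2,3,4}, the map σ^{n,k}_T : W(n−1, T−k) → W(n,T), defined by σ^{n,k}_T(x_1,…,x_{n−1}) = (x_1,…,x_{n−1}, (x_{n−1}+k) mod* 4), is injective, its image is contained in W(n,T), and W(n,T) is the disjoint union over k = 1,2,3,4 of the images σ^{n,k}_T(W(n−1, T−k)). -/
/-- The map `σ^{n,k}_T`, appending `(x_{n-1} + k) mod* 4` to a word. -/
def sigmaMap (k : ℤ) (x : List ℤ) : List ℤ := x ++ [mods4 (x.getLastD 0 + k)]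

def altSeqFrom (s T : ℕ) : List ℤ := (List.range T).map (fun i => (((i + s) % 4 : ℕ) : ℤ) + 1)

lemma altSeq_eq (T : ℕ) : altSeq T = altSeqFrom 0 T := by simp [altSeq, altSeqFrom]

lemma altSeqFrom_succ (s T : ℕ) :
    altSeqFrom s (T + 1) = (((s % 4 : ℕ) : ℤ) + 1) :: altSeqFrom (s + 1) T := by
  unfold altSeqFrom
  rw [List.range_succ_eq_map, List.map_cons, List.map_map]
  simp only [Nat.zero_add]
  congr 1
  apply List.map_congr_left
  intro i _
  simp only [Function.comp_apply]
  push_cast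
  omega

def cost (p : ℤ) : List ℤ → ℤ
  | [] => 0
  | c :: r => mods4 (c - p) + cost c r

lemma cost_nonneg (p : ℤ) (x : List ℤ) : 0 ≤ cost p x := by
  induction x generalizing p with
  | nil => simp [cost]
  | cons c r ih =>
    have h1 : 1 ≤ mods4 (c - p) := by unfold mods4; omega
    have := ih c
    simp only [cost]; linarith

lemma cost_congr (p q : ℤ) (x : List ℤ) (h : (p - q) % 4 = 0) : cost p x = cost q x := by
  cases x with
  | nil => rfl
  | cons c r =>
    simp only [cost]
    have : mods4 (c - p) = mods4 (c - q) := by unfold mods4; omega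
    rw [this]

lemma cost_le_of_sublist : ∀ (T s : ℕ) (x : List ℤ), IsQ x →
    x.Sublist (altSeqFrom s T) → cost (s : ℤ) x ≤ (T : ℤ) := by
  intro T
  induction T with
  | zero =>
    intro s x hx h
    simp [altSeqFrom] at h
    subst h; simp [cost]
  | succ T ih =>
    intro s x hx h
    cases x with
    | nil => simpa [cost] using Int.ofNat_nonneg (T+1)
    | cons c r =>
      rw [altSeqFrom_succ] at h
      cases h with
      | cons _ h' =>
        have h1 := ih (s + 1) (c :: r) hx h'
        simp only [cost] at h1 ⊢
        have hm : mods4 (c - (s : ℤ)) ≤ mods4 (c - ((s : ℤ) + 1)) + 1 := by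
          unfold mods4; omega
        push_cast at h1 ⊢
        linarith
      | cons_cons _ h' =>
        have hr : IsQ r := fun a ha => hx a (List.mem_cons_of_mem _ ha)
        have h1 := ih (s + 1) r hr h'
        push_cast at h1
        simp only [cost]
        have hm : mods4 ((((s % 4 : ℕ) : ℤ) + 1) - (s : ℤ)) = 1 := by
          unfold mods4; omega
        have hc : cost (((s % 4 : ℕ) : ℤ) + 1) r = cost ((s : ℤ) + 1) r := by
          apply cost_congr; omega
        rw [hm, hc]
        push_cast
        linarith

lemma sublist_of_cost_le : ∀ (T s : ℕ) (x : List ℤ), IsQ x →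
    cost (s : ℤ) x ≤ (T : ℤ) → x.Sublist (altSeqFrom s T) := by
  intro T
  induction T with
  | zero =>
    intro s x hx h
    cases x with
    | nil => simp
    | cons c r =>
      exfalso
      have h1 : 1 ≤ mods4 (c - (s : ℤ)) := by unfold mods4; omega
      have h2 := cost_nonneg c r
      simp only [cost] at h
      push_cast at h
      linarith
  | succ T ih =>
    intro s x hx h
    cases x with
    | nil => simp
    | cons c r =>
      have hr : IsQ r := fun a ha => hx a (List.mem_cons_of_mem _ ha)
      have hc4 := hx c List.mem_cons_self
      rw [altSeqFrom_succ]
      simp only [cost] at h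
      push_cast at h
      by_cases hm : mods4 (c - (s : ℤ)) = 1
      · have hcv : c = ((s % 4 : ℕ) : ℤ) + 1 := by unfold mods4 at hm; omega
        have hcost : cost c r = cost ((s : ℤ) + 1) r := by
          apply cost_congr; unfold mods4 at hm; omega
        have h1 : cost ((s : ℤ) + 1) r ≤ (T : ℤ) := by
          rw [← hcost]; rw [hm] at h; linarith
        have := ih (s + 1) r hr (by push_cast; exact h1)
        rw [hcv]
        exact List.Sublist.cons₂ _ this
      · have hm2 : mods4 (c - ((s : ℤ) + 1)) = mods4 (c - (s : ℤ)) - 1 := by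
          unfold mods4 at hm ⊢; omega
        have h1 : cost ((s : ℤ) + 1) (c :: r) ≤ (T : ℤ) := by
          simp only [cost]
          rw [hm2]; linarith
        have := ih (s + 1) (c :: r) hx (by push_cast; exact h1)
        exact List.Sublist.cons _ this

lemma synTime_eq_cost (x : List ℤ) (hx : IsQ x) : (synTime x : ℤ) = cost 0 x := by
  have h0 : 0 ≤ cost 0 x := cost_nonneg 0 x
  have hset : {T : ℕ | x.Sublist (altSeq T)} = Set.Ici (cost 0 x).toNat := by
    ext T
    simp only [Set.mem_setOf_eq, Set.mem_Ici, altSeq_eq]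
    constructor
    · intro h
      have := cost_le_of_sublist T 0 x hx h
      simp only [Nat.cast_zero] at this
      omega
    · intro h
      have : cost ((0 : ℕ) : ℤ) x ≤ (T : ℤ) := by simp only [Nat.cast_zero]; omega
      exact sublist_of_cost_le T 0 x hx this
  unfold synTime
  rw [hset, csInf_Ici]
  omega

lemma cost_append (p : ℤ) (x : List ℤ) (b : ℤ) :
    cost p (x ++ [b]) = cost p x + mods4 (b - x.getLastD p) := by
  induction x generalizing p with
  | nil => simp [cost]
  | cons c r ih =>
    simp only [List.cons_append, cost, List.append_eq, List.getLastD_cons, ih c]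
    ring

lemma synTime_append (x : List ℤ) (hx : IsQ x) (b : ℤ) (hb : 1 ≤ b ∧ b ≤ 4) :
    (synTime (x ++ [b]) : ℤ) = (synTime x : ℤ) + mods4 (b - x.getLastD 0) := by
  have hq : IsQ (x ++ [b]) := by
    intro a ha
    rcases List.mem_append.1 ha with h | h
    · exact hx a h
    · simp at h; subst h; exact hb
  rw [synTime_eq_cost _ hq, synTime_eq_cost _ hx, cost_append]

lemma synTime_sigmaMap (k : ℤ) (hk1 : 1 ≤ k) (hk4 : k ≤ 4) (x : List ℤ) (hx : IsQ x) :
    (synTime (sigmaMap k x) : ℤ) = (synTime x : ℤ) + k := by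
  unfold sigmaMap
  rw [synTime_append x hx _ (mods4_mem _)]
  congr 1
  unfold mods4
  omega

lemma isQ_sigmaMap (k : ℤ) (x : List ℤ) (hx : IsQ x) : IsQ (sigmaMap k x) := by
  intro a ha
  rcases List.mem_append.1 ha with h | h
  · exact hx a h
  · simp at h; subst h; exact mods4_mem _

/-- for `n ≥ 2` and `k ∈ {1,2,3,4}`, the map `σ^{n,k}_T` is injective
on `W(n-1,T-k)`, maps it into `W(n,T)`, and `W(n,T)` is the disjoint union of the
four images. -/
theorem sigmaMap_partition (n : ℕ) (hn : 2 ≤ n) (T : ℤ) :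
    (∀ k : ℤ, 1 ≤ k → k ≤ 4 →
      Set.InjOn (sigmaMap k) (W (n - 1) (T - k)) ∧
      sigmaMap k '' W (n - 1) (T - k) ⊆ W n T) ∧
    (W n T = ⋃ k ∈ Finset.Icc (1 : ℤ) 4, sigmaMap k '' W (n - 1) (T - k)) ∧
    (∀ k ∈ Finset.Icc (1 : ℤ) 4, ∀ k' ∈ Finset.Icc (1 : ℤ) 4, k ≠ k' →
      Disjoint (sigmaMap k '' W (n - 1) (T - k)) (sigmaMap k' '' W (n - 1) (T - k'))) := by
  have himg : ∀ k : ℤ, 1 ≤ k → k ≤ 4 → sigmaMap k '' W (n - 1) (T - k) ⊆ W n T := by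
    rintro k hk1 hk4 _ ⟨x, ⟨hlen, hq, hst⟩, rfl⟩
    refine ⟨?_, isQ_sigmaMap k x hq, ?_⟩
    · simp [sigmaMap, hlen]; omega
    · rw [synTime_sigmaMap k hk1 hk4 x hq]; linarith
  refine ⟨fun k hk1 hk4 => ⟨?_, himg k hk1 hk4⟩, ?_, ?_⟩
  · -- injectivity
    intro x hx y hy h
    unfold sigmaMap at h
    exact (List.append_inj h (by rw [hx.1, hy.1])).1
  · -- union
    ext y
    simp only [Set.mem_iUnion, Finset.mem_Icc, exists_prop]
    constructor
    · rintro ⟨hlen, hq, hst⟩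
      have hne : y ≠ [] := by intro h; rw [h] at hlen; simp at hlen; omega
      set x := y.dropLast with hxdef
      set b := y.getLast hne with hbdef
      have hyx : x ++ [b] = y := List.dropLast_append_getLast hne
      have hqx : IsQ x := fun a ha => hq a (List.mem_of_mem_dropLast ha)
      have hb : 1 ≤ b ∧ b ≤ 4 := hq b (List.getLast_mem hne)
      set k := mods4 (b - x.getLastD 0) with hkdef
      have hk := mods4_mem (b - x.getLastD 0)
      refine ⟨k, ⟨hk.1, hk.2⟩, x, ⟨?_, hqx, ?_⟩, ?_⟩
      · rw [hxdef, List.length_dropLast, hlen]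
      · have hap : (synTime (x ++ [b]) : ℤ) = (synTime x : ℤ) + k := by
          rw [synTime_append x hqx b hb]
        rw [hyx] at hap
        linarith [hap ▸ hst]
      · unfold sigmaMap
        have : mods4 (x.getLastD 0 + k) = b := by
          rw [hkdef]; unfold mods4; omega
        rw [this, hyx]
    · rintro ⟨k, ⟨hk1, hk4⟩, x, hx, rfl⟩
      exact himg k hk1 hk4 ⟨x, hx, rfl⟩
  · -- disjoint
    intro k hk k' hk' hne
    simp only [Finset.mem_Icc] at hk hk'
    rw [Set.disjoint_left]
    rintro _ ⟨x, hx, rfl⟩ ⟨x', hx', h⟩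
    unfold sigmaMap at h
    have hlen : x'.length = x.length := by rw [hx'.1, hx.1]
    obtain ⟨hxx, hbb⟩ := List.append_inj h hlen
    subst hxx
    simp only [List.cons.injEq] at hbb
    have := hbb.1
    unfold mods4 at this
    omega
end
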